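/- Let X, L, Y be nonempty finite types and let p be a probability mass function on X × L × Y × Y, with coordinates written (x, l, y, s) where the last coordinate is the sampling intention S taking values in the same type as the label Y. Assume the sampling intention depends only on L: for all x, l, y, s with P(X=x, L=l, Y=y) > 0 (which forces P(L=l) > 0), P(S=s | X=x, L=l, Y=y) = P(S=s | L=l). Write {S=Y} for the event that the last two coordinates are equal. Then for all x, l, y with P(X=x, L=l, S=Y) > 0, P(X=x, L=l) > 0, P(X=x, L=l, Y=y) > 0, and P(L=l) > 0: P(Y=y | X=x, L=l, S=Y) = P(S=y | L=l) · P(Y=y | X=x, L=l) · P(X=x, L=l) / P(X=x, L=l, S=Y). -/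

import Mathlib

/-- first identity of the leakage-neutral decomposition: pmf on
`X × L × Y × Y` with coordinates `(x, l, y, s)`, `s` being the sampling
intention `S`. If `P(S=s | X=x, L=l, Y=y) = P(S=s | L=l)` whenever
`P(X=x, L=l, Y=y) > 0`, then
`P(Y=y | X=x, L=l, S=Y) = P(S=y | L=l) · P(Y=y | X=x, L=l) · P(X=x, L=l) / P(X=x, L=l, S=Y)`
under the stated positivity conditions. -/
theorem stmt_15 {X L Y : Type*} [Fintype X] [Fintype L] [Fintype Y]
    [Nonempty X] [Nonempty L] [Nonempty Y]
    (p : X × L × Y × Y → ℝ) (hp : ∀ z, 0 ≤ p z)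
    (hsum : ∑ z : X × L × Y × Y, p z = 1)
    -- the sampling intention depends only on L:
    (hS : ∀ (x : X) (l : L) (y : Y) (s : Y),
      0 < (∑ s' : Y, p (x, l, y, s')) →
      p (x, l, y, s) / (∑ s' : Y, p (x, l, y, s')) =
        (∑ x' : X, ∑ y' : Y, p (x', l, y', s)) /
          (∑ x' : X, ∑ y' : Y, ∑ s' : Y, p (x', l, y', s'))) :
    ∀ (x : X) (l : L) (y : Y),
      0 < (∑ y' : Y, p (x, l, y', y')) →                    -- P(X=x,L=l,S=Y)>0
      0 < (∑ y' : Y, ∑ s' : Y, p (x, l, y', s')) →          -- P(X=x,L=l)>0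
      0 < (∑ s' : Y, p (x, l, y, s')) →                     -- P(X=x,L=l,Y=y)>0
      0 < (∑ x' : X, ∑ y' : Y, ∑ s' : Y, p (x', l, y', s')) →   -- P(L=l)>0
      p (x, l, y, y) / (∑ y' : Y, p (x, l, y', y')) =
        ((∑ x' : X, ∑ y' : Y, p (x', l, y', y)) /
            (∑ x' : X, ∑ y' : Y, ∑ s' : Y, p (x', l, y', s'))) *
          ((∑ s' : Y, p (x, l, y, s')) /
            (∑ y' : Y, ∑ s' : Y, p (x, l, y', s'))) *
          (∑ y' : Y, ∑ s' : Y, p (x, l, y', s')) /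
          (∑ y' : Y, p (x, l, y', y')) := by
  intro x l y hSY hXL hXLY hL
  have h := hS x l y y hXLY
  have hpy : p (x, l, y, y) =
      (∑ x' : X, ∑ y' : Y, p (x', l, y', y)) /
        (∑ x' : X, ∑ y' : Y, ∑ s' : Y, p (x', l, y', s')) *
        (∑ s' : Y, p (x, l, y, s')) := by
    field_simp at h
    rw [div_mul_eq_mul_div, eq_div_iff hL.ne']
    linarith [h]
  rw [hpy]
  field_simp
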